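/- arXiv:2512.04654 — 2 statements merged into one kernel-verified Lean document; each statement's English description precedes it below -/
import Mathlib

section
/- Under the hypotheses of the truncated convergence lemma (nonnegative $h_m \in L^1(0,T)$ uniformly bounded in $L^1$, $h_m \to h$ a.e. with $h \in L^1(0,T)$, and weights $p(\alpha,\cdot)$ as above with $g(\alpha) \to \infty$ as $\alpha \to \hat\alpha^-$), one has the iterated limit $\lim_{\alpha\to\hat\alpha^-} \lim_m \int_0^T h_m(t)\, p(\alpha, h_m(t))\,dt = \int_0^T h(t)\,dt$. -/
open MeasureTheory Filter Real Set

private lemma aux_trunc (μ : Measure ℝ) [IsFiniteMeasure μ] (M : ℝ)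
    (h : ℝ → ℝ) (f : ℕ → ℝ → ℝ) (q : ℝ → ℝ)
    (hf_nonneg : ∀ m, ∀ᵐ t ∂μ, 0 ≤ f m t)
    (hf_int : ∀ m, Integrable (f m) μ)
    (hf_bdd : ∀ m, ∫ t, f m t ∂μ ≤ M)
    (h_ae : ∀ᵐ t ∂μ, Tendsto (fun m => f m t) atTop (nhds (h t)))
    (h_int : Integrable h μ)
    (hq_cont : ContinuousOn q (Ici 0))
    (hq_range : ∀ r : ℝ, 0 ≤ r → q r ∈ Icc (0:ℝ) 1)
    (hq_lim : Tendsto q atTop (nhds 0)) :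
    Tendsto (fun m => ∫ t, f m t * q (f m t) ∂μ) atTop
      (nhds (∫ t, h t * q (h t) ∂μ)) := by
  have h_nonneg : ∀ᵐ t ∂μ, 0 ≤ h t := by
    filter_upwards [h_ae, ae_all_iff.2 hf_nonneg] with t ht htn
    exact ge_of_tendsto' ht htn
  have hfm : ∀ m, AEStronglyMeasurable (f m) μ := fun m => (hf_int m).1
  have hqc : Continuous (fun r : ℝ => q (max r 0)) :=
    hq_cont.comp_continuous (continuous_id.max continuous_const)
      (fun x => Set.mem_Ici.2 (le_max_right _ _))
  have hqf : ∀ m, AEStronglyMeasurable (fun t => q (f m t)) μ := by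
    intro m
    refine (hqc.comp_aestronglyMeasurable (hfm m)).congr ?_
    filter_upwards [hf_nonneg m] with t ht
    simp [max_eq_left ht]
  have hqh : AEStronglyMeasurable (fun t => q (h t)) μ := by
    refine (hqc.comp_aestronglyMeasurable h_int.1).congr ?_
    filter_upwards [h_nonneg] with t ht
    simp [max_eq_left ht]
  have hint1 : ∀ m, Integrable (fun t => f m t * q (f m t)) μ := by
    intro m
    refine (hf_int m).mono ((hfm m).mul (hqf m)) ?_
    filter_upwards [hf_nonneg m] with t ht
    have hq := hq_range _ ht
    rw [Real.norm_eq_abs, Real.norm_eq_abs, abs_of_nonneg (mul_nonneg ht hq.1),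
      abs_of_nonneg ht]
    exact mul_le_of_le_one_right ht hq.2
  have hinth : Integrable (fun t => h t * q (h t)) μ := by
    refine h_int.mono (h_int.1.mul hqh) ?_
    filter_upwards [h_nonneg] with t ht
    have hq := hq_range _ ht
    rw [Real.norm_eq_abs, Real.norm_eq_abs, abs_of_nonneg (mul_nonneg ht hq.1),
      abs_of_nonneg ht]
    exact mul_le_of_le_one_right ht hq.2
  rw [Metric.tendsto_atTop]
  intro ε hε
  have hM : 0 ≤ M := le_trans (integral_nonneg_of_ae (hf_nonneg 0)) (hf_bdd 0)
  have hI : 0 ≤ ∫ t, h t ∂μ := integral_nonneg_of_ae h_nonneg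
  set C : ℝ := M + (∫ t, h t ∂μ) + 1 with hCdef
  have hC : 0 < C := by positivity
  set ε' : ℝ := ε / (3 * C) with hε'def
  have hε' : 0 < ε' := by positivity
  have hε'C : ε' * C = ε / 3 := by
    rw [hε'def]; field_simp
  obtain ⟨R₀, hR₀⟩ := eventually_atTop.1 (hq_lim.eventually (Iio_mem_nhds hε'))
  set R : ℝ := max R₀ 1 with hRdef
  have hRpos : (0:ℝ) < R := lt_of_lt_of_le one_pos (le_max_right _ _)
  have hqR : ∀ s, R ≤ s → q s < ε' := fun s hs =>
    hR₀ s (le_trans (le_max_left _ _) hs)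
  -- integrability of truncated products
  have htrm : ∀ m, AEStronglyMeasurable (fun t => min (f m t) R * q (f m t)) μ :=
    fun m => ((continuous_id.min continuous_const).comp_aestronglyMeasurable (hfm m)).mul (hqf m)
  have hintr : ∀ m, Integrable (fun t => min (f m t) R * q (f m t)) μ := by
    intro m
    refine (hf_int m).mono (htrm m) ?_
    filter_upwards [hf_nonneg m] with t ht
    have hq := hq_range _ ht
    rw [Real.norm_eq_abs, Real.norm_eq_abs,
      abs_of_nonneg (mul_nonneg (le_min ht hRpos.le) hq.1), abs_of_nonneg ht]
    calc min (f m t) R * q (f m t) ≤ f m t * 1 :=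
          mul_le_mul (min_le_left _ _) hq.2 hq.1 ht
      _ = f m t := mul_one _
  have hintrh : Integrable (fun t => min (h t) R * q (h t)) μ := by
    refine h_int.mono (((continuous_id.min continuous_const).comp_aestronglyMeasurable
      h_int.1).mul hqh) ?_
    filter_upwards [h_nonneg] with t ht
    have hq := hq_range _ ht
    rw [Real.norm_eq_abs, Real.norm_eq_abs,
      abs_of_nonneg (mul_nonneg (le_min ht hRpos.le) hq.1), abs_of_nonneg ht]
    calc min (h t) R * q (h t) ≤ h t * 1 :=
          mul_le_mul (min_le_left _ _) hq.2 hq.1 ht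
      _ = h t := mul_one _
  -- dominated convergence for the truncated integrals
  have hDCT : Tendsto (fun m => ∫ t, min (f m t) R * q (f m t) ∂μ) atTop
      (nhds (∫ t, min (h t) R * q (h t) ∂μ)) := by
    refine tendsto_integral_of_dominated_convergence (fun _ => R) htrm
      (integrable_const R) ?_ ?_
    · intro m
      filter_upwards [hf_nonneg m] with t ht
      have hq := hq_range _ ht
      rw [Real.norm_eq_abs, abs_of_nonneg (mul_nonneg (le_min ht hRpos.le) hq.1)]
      calc min (f m t) R * q (f m t) ≤ R * 1 :=
            mul_le_mul (min_le_right _ _) hq.2 hq.1 hRpos.le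
        _ = R := mul_one _
    · filter_upwards [h_ae, ae_all_iff.2 hf_nonneg, h_nonneg] with t ht htn hhn
      have h1 : Tendsto (fun m => q (f m t)) atTop (nhds (q (h t))) := by
        have h2 : Tendsto (fun m => f m t) atTop (nhdsWithin (h t) (Ici 0)) :=
          tendsto_nhdsWithin_of_tendsto_nhds_of_eventually_within _ ht
            (Eventually.of_forall htn)
        exact (hq_cont (h t) hhn).tendsto.comp h2
      exact (ht.min tendsto_const_nhds).mul h1
  -- difference bound between the full and truncated integrals
  have hdiff : ∀ u : ℝ → ℝ, Integrable u μ → (∀ᵐ t ∂μ, 0 ≤ u t) →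
      Integrable (fun t => u t * q (u t)) μ →
      Integrable (fun t => min (u t) R * q (u t)) μ →
      |(∫ t, u t * q (u t) ∂μ) - ∫ t, min (u t) R * q (u t) ∂μ| ≤ ε' * ∫ t, u t ∂μ := by
    intro u hu hun hu1 hu2
    rw [← integral_sub hu1 hu2]
    have hptw : ∀ᵐ t ∂μ, 0 ≤ u t * q (u t) - min (u t) R * q (u t) ∧
        u t * q (u t) - min (u t) R * q (u t) ≤ ε' * u t := by
      filter_upwards [hun] with t ht
      have hq := hq_range _ ht
      rcases le_or_gt (u t) R with hc | hc
      · rw [min_eq_left hc, sub_self]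
        exact ⟨le_rfl, mul_nonneg hε'.le ht⟩
      · rw [min_eq_right hc.le]
        have hqlt : q (u t) < ε' := hqR _ hc.le
        constructor
        · have h3 : R * q (u t) ≤ u t * q (u t) :=
            mul_le_mul_of_nonneg_right hc.le hq.1
          linarith
        · have h4 : u t * q (u t) ≤ u t * ε' :=
            mul_le_mul_of_nonneg_left hqlt.le ht
          have h5 : 0 ≤ R * q (u t) := mul_nonneg hRpos.le hq.1
          calc u t * q (u t) - R * q (u t) ≤ u t * q (u t) := by linarith
            _ ≤ u t * ε' := h4
            _ = ε' * u t := mul_comm _ _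
    rw [abs_of_nonneg (integral_nonneg_of_ae (hptw.mono fun t ht => ht.1))]
    calc ∫ t, (u t * q (u t) - min (u t) R * q (u t)) ∂μ
        ≤ ∫ t, ε' * u t ∂μ :=
          integral_mono_ae (hu1.sub hu2) (hu.const_mul ε') (hptw.mono fun t ht => ht.2)
      _ = ε' * ∫ t, u t ∂μ := integral_const_mul _ _
  obtain ⟨N, hN⟩ := Metric.tendsto_atTop.1 hDCT (ε / 3) (by positivity)
  refine ⟨N, fun n hn => ?_⟩
  have h1 := hdiff (f n) (hf_int n) (hf_nonneg n) (hint1 n) (hintr n)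
  have h2 := hdiff h h_int h_nonneg hinth hintrh
  have h3 := hN n hn
  rw [Real.dist_eq] at h3 ⊢
  have hb1 : ε' * ∫ t, f n t ∂μ ≤ ε / 3 := by
    calc ε' * ∫ t, f n t ∂μ ≤ ε' * M := by
          exact mul_le_mul_of_nonneg_left (hf_bdd n) hε'.le
      _ ≤ ε' * C := by nlinarith
      _ = ε / 3 := hε'C
  have hb2 : ε' * ∫ t, h t ∂μ ≤ ε / 3 := by
    calc ε' * ∫ t, h t ∂μ ≤ ε' * C := by nlinarith
      _ = ε / 3 := hε'C
  have k1 := abs_sub_le (∫ t, f n t * q (f n t) ∂μ)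
    (∫ t, min (f n t) R * q (f n t) ∂μ) (∫ t, h t * q (h t) ∂μ)
  have k2 := abs_sub_le (∫ t, min (f n t) R * q (f n t) ∂μ)
    (∫ t, min (h t) R * q (h t) ∂μ) (∫ t, h t * q (h t) ∂μ)
  have k3 : |(∫ t, min (h t) R * q (h t) ∂μ) - ∫ t, h t * q (h t) ∂μ|
      = |(∫ t, h t * q (h t) ∂μ) - ∫ t, min (h t) R * q (h t) ∂μ| := abs_sub_comm _ _
  linarith


theorem truncated_convergence_iterated
    (T M αhat : ℝ) (hT : 0 < T) (hαhat : 0 < αhat)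
    (h : ℝ → ℝ) (hm : ℕ → ℝ → ℝ) (p : ℝ → ℝ → ℝ) (g : ℝ → ℝ)
    (hm_nonneg : ∀ m, ∀ t ∈ Ioo (0:ℝ) T, 0 ≤ hm m t)
    (hm_int : ∀ m, IntegrableOn (hm m) (Ioo 0 T))
    (hm_bdd : ∀ m, ∫ t in Ioo 0 T, hm m t ≤ M)
    (h_ae : ∀ᵐ t ∂(volume.restrict (Ioo 0 T)),
      Tendsto (fun m => hm m t) atTop (nhds (h t)))
    (h_int : IntegrableOn h (Ioo 0 T))
    (hp_cont : ∀ α ∈ Ioo (0:ℝ) αhat, ContinuousOn (p α) (Ici 0))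
    (hp_range : ∀ α ∈ Ioo (0:ℝ) αhat, ∀ r : ℝ, 0 ≤ r → p α r ∈ Icc (0:ℝ) 1)
    (hp_one : ∀ α ∈ Ioo (0:ℝ) αhat, ∀ r ∈ Icc (0:ℝ) (g α), p α r = 1)
    (hp_anti : ∀ α ∈ Ioo (0:ℝ) αhat, AntitoneOn (p α) (Ioi (g α)))
    (hp_lim : ∀ α ∈ Ioo (0:ℝ) αhat, Tendsto (p α) atTop (nhds 0))
    (hg_mono : StrictMonoOn g (Ioo 0 αhat))
    (hg_cont : ContinuousOn g (Ioo 0 αhat))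
    (hg_lim : Tendsto g (nhdsWithin αhat (Iio αhat)) atTop) :
    ∀ α ∈ Ioo (0:ℝ) αhat,
    ∃ L : ℝ → ℝ,
      (∀ α ∈ Ioo (0:ℝ) αhat,
        Tendsto (fun m => ∫ t in Ioo 0 T, hm m t * p α (hm m t)) atTop (nhds (L α))) ∧
      Tendsto L (nhdsWithin αhat (Iio αhat)) (nhds (∫ t in Ioo 0 T, h t)) := by
  intro α₀ hα₀
  set μ : Measure ℝ := volume.restrict (Ioo 0 T) with hμdef
  haveI : Fact (volume (Ioo (0:ℝ) T) < ⊤) := ⟨measure_Ioo_lt_top⟩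
  have h_nonneg : ∀ᵐ t ∂μ, 0 ≤ h t := by
    filter_upwards [h_ae, ae_all_iff.2 fun m =>
      (ae_restrict_iff' measurableSet_Ioo).2 (Eventually.of_forall (hm_nonneg m))]
      with t ht htn
    exact ge_of_tendsto' ht htn
  refine ⟨fun α => ∫ t in Ioo 0 T, h t * p α (h t), ?_, ?_⟩
  · intro α hα
    exact aux_trunc μ M h hm (p α)
      (fun m => (ae_restrict_iff' measurableSet_Ioo).2 (Eventually.of_forall (hm_nonneg m)))
      hm_int hm_bdd h_ae h_int (hp_cont α hα) (hp_range α hα) (hp_lim α hα)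
  · -- dominated convergence in α
    have hmem : ∀ᶠ α in nhdsWithin αhat (Iio αhat), α ∈ Ioo (0:ℝ) αhat := by
      have h1 : ∀ᶠ α in nhdsWithin αhat (Iio αhat), α ∈ Iio αhat :=
        eventually_mem_nhdsWithin
      have h2 : ∀ᶠ α in nhdsWithin αhat (Iio αhat), 0 < α :=
        (eventually_gt_nhds hαhat).filter_mono nhdsWithin_le_nhds
      filter_upwards [h1, h2] with α hα1 hα2
      exact ⟨hα2, hα1⟩
    refine tendsto_integral_filter_of_dominated_convergence (fun t => |h t|) ?_ ?_ ?_ ?_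
    · filter_upwards [hmem] with α hα
      have hqc : Continuous (fun r : ℝ => p α (max r 0)) :=
        (hp_cont α hα).comp_continuous (continuous_id.max continuous_const)
          (fun x => Set.mem_Ici.2 (le_max_right _ _))
      refine (h_int.1.mul ((hqc.comp_aestronglyMeasurable h_int.1).congr ?_))
      filter_upwards [h_nonneg] with t ht
      simp [max_eq_left ht]
    · filter_upwards [hmem] with α hα
      filter_upwards [h_nonneg] with t ht
      have hq := hp_range α hα _ ht
      rw [Real.norm_eq_abs, abs_of_nonneg (mul_nonneg ht hq.1), abs_of_nonneg ht]
      exact mul_le_of_le_one_right ht hq.2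
    · exact h_int.abs
    · filter_upwards [h_nonneg] with t ht
      have hev : ∀ᶠ α in nhdsWithin αhat (Iio αhat), h t * p α (h t) = h t := by
        filter_upwards [hmem, hg_lim.eventually_ge_atTop (h t)] with α hα hgα
        rw [hp_one α hα _ ⟨ht, hgα⟩, mul_one]
      exact Tendsto.congr' (EventuallyEq.symm hev) tendsto_const_nhds
end

section
/- Let $\{\rho_m\}$ be measurable nonnegative functions on $(s,t)$ converging almost everywhere to $\rho \in L^1(s,t)$. For $\alpha \in (0,1)$ set $J(\alpha,m) := \{\tau \in (s,t) : \rho_m(\tau) > \tan(\alpha\pi/2)\}$, and assume $|J(\alpha,m)| \le c/\tan(\alpha\pi/2)$ for all $m$, with $c$ independent of $\alpha$ and $m$. Then $\lim_{\alpha\to1^-} \frac{1}{1-\alpha} \limsup_m \int_{J(\alpha,m)} \frac{\rho_m^2}{1+\rho_m^2}\,d\tau = 0$. -/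
open MeasureTheory Filter Real Set

lemma lemA : Tendsto (fun α : ℝ => (1 - α) * Real.tan (α * π / 2)) (nhdsWithin 1 (Iio 1))
    (nhds (2 / π)) := by
  have htan : Tendsto (fun x : ℝ => Real.tan x / x) (nhdsWithin 0 {(0:ℝ)}ᶜ) (nhds 1) := by
    have h := hasDerivAt_iff_tendsto_slope.mp (Real.hasDerivAt_tan (x := 0) (by simp))
    simp only [Real.cos_zero, one_pow, div_one] at h
    have heq : slope Real.tan 0 = fun x : ℝ => Real.tan x / x := by
      funext x; simp [slope_def_field, div_eq_mul_inv]
    rwa [heq] at h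
  have hinv : Tendsto (fun x : ℝ => x / Real.tan x) (nhdsWithin 0 {(0:ℝ)}ᶜ) (nhds 1) := by
    have := (htan.inv₀ one_ne_zero)
    simpa [inv_div] using this
  have hv : Tendsto (fun α : ℝ => (1 - α) * π / 2) (nhdsWithin 1 (Iio 1))
      (nhdsWithin 0 {(0:ℝ)}ᶜ) := by
    apply tendsto_nhdsWithin_of_tendsto_nhds_of_eventually_within
    · have : Tendsto (fun α : ℝ => (1 - α) * π / 2) (nhds 1) (nhds ((1-1)*π/2)) :=
        Tendsto.div_const (Tendsto.mul_const _ (tendsto_const_nhds.sub tendsto_id)) 2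
      simpa using this.mono_left nhdsWithin_le_nhds
    · filter_upwards [self_mem_nhdsWithin] with α (hα : α < 1)
      have h1 : 0 < (1 - α) * π := mul_pos (by linarith) Real.pi_pos
      have : 0 < (1 - α) * π / 2 := by linarith
      simp [this.ne']
  have key := (hinv.comp hv).const_mul (2 / π)
  rw [mul_one] at key
  apply key.congr
  intro α
  have hpi : (π:ℝ) ≠ 0 := Real.pi_ne_zero
  have h1 : Real.tan (α * π / 2) = (Real.tan ((1 - α) * π / 2))⁻¹ := by
    rw [← Real.tan_pi_div_two_sub]
    ring_nf
  simp only [Function.comp]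
  rw [h1, div_eq_mul_inv ((1 - α) * π / 2)]
  have h2 : (2:ℝ)/π * ((1-α)*π/2) = 1-α := by field_simp
  linear_combination h2 * (Real.tan ((1 - α) * π / 2))⁻¹

lemma lemB : Tendsto (fun α : ℝ => Real.tan (α * π / 2)) (nhdsWithin 1 (Iio 1)) atTop := by
  apply Real.tendsto_tan_pi_div_two.comp
  apply tendsto_nhdsWithin_of_tendsto_nhds_of_eventually_within
  · have : Tendsto (fun α : ℝ => α * π / 2) (nhds 1) (nhds (1 * π / 2)) :=
      Tendsto.div_const (Tendsto.mul_const _ tendsto_id) 2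
    simpa using this.mono_left nhdsWithin_le_nhds
  · filter_upwards [self_mem_nhdsWithin] with α (hα : α < 1)
    have : α * π / 2 < π / 2 := by
      have := Real.pi_pos; nlinarith
    simpa using this


lemma lemD (μ : Measure ℝ) [IsFiniteMeasure μ] (ρ' : ℝ → ℝ) (hm : Measurable ρ')
    (hint : Integrable ρ' μ) :
    Tendsto (fun u : ℝ => u * (μ {τ | u ≤ ρ' τ}).toReal) atTop (nhds 0) := by
  have hAm : ∀ u : ℝ, MeasurableSet {τ | u ≤ ρ' τ} := fun u =>
    measurableSet_le measurable_const hm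
  have hI : Tendsto (fun u : ℝ => ∫ τ, Set.indicator {τ | u ≤ ρ' τ} ρ' τ ∂μ) atTop (nhds 0) := by
    have h0 : (0:ℝ) = ∫ τ, (0:ℝ) ∂μ := by simp
    rw [h0]
    apply tendsto_integral_filter_of_dominated_convergence (fun τ => |ρ' τ|)
    · exact Eventually.of_forall fun u =>
        (hm.indicator (hAm u)).aestronglyMeasurable
    · exact Eventually.of_forall fun u => ae_of_all _ fun τ => by
        simpa using norm_indicator_le_norm_self (s := {τ | u ≤ ρ' τ}) (f := ρ') (a := τ)
    · exact hint.abs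
    · refine ae_of_all _ fun τ => ?_
      have : ∀ᶠ u : ℝ in atTop, Set.indicator {τ | u ≤ ρ' τ} ρ' τ = 0 := by
        filter_upwards [eventually_gt_atTop (ρ' τ)] with u hu
        exact Set.indicator_of_notMem (by simpa using hu) _
      exact tendsto_const_nhds.congr' (this.mono fun u h => h.symm)
  refine tendsto_of_tendsto_of_tendsto_of_le_of_le' tendsto_const_nhds hI ?_ ?_
  · filter_upwards [eventually_ge_atTop (0:ℝ)] with u hu
    exact mul_nonneg hu ENNReal.toReal_nonneg
  · refine Eventually.of_forall fun u => ?_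
    rw [integral_indicator (hAm u)]
    have h := setIntegral_ge_of_const_le (hAm u) (measure_ne_top μ _)
      (fun x hx => hx) hint.integrableOn
    rw [smul_eq_mul, mul_comm] at h
    exact h


theorem limsup_superlevel_vanishes
    (s t c : ℝ) (hst : s < t) (hc : 0 < c)
    (ρm : ℕ → ℝ → ℝ) (ρ : ℝ → ℝ)
    (hmeas : ∀ m, Measurable (ρm m))
    (hnonneg : ∀ m, ∀ τ ∈ Ioo s t, 0 ≤ ρm m τ)
    (hae : ∀ᵐ τ ∂(volume.restrict (Ioo s t)),
      Tendsto (fun m => ρm m τ) atTop (nhds (ρ τ)))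
    (hρ_int : IntegrableOn ρ (Ioo s t))
    (J : ℝ → ℕ → Set ℝ)
    (hJ : ∀ α m, J α m = {τ ∈ Ioo s t | Real.tan (α * π / 2) < ρm m τ})
    (hJ_meas : ∀ α ∈ Ioo (0:ℝ) 1, ∀ m,
      volume (J α m) ≤ ENNReal.ofReal (c / Real.tan (α * π / 2))) :
    Tendsto (fun α : ℝ => (1 - α)⁻¹ *
        Filter.limsup (fun m => ∫ τ in J α m, (ρm m τ) ^ 2 / (1 + (ρm m τ) ^ 2)) atTop)
      (nhdsWithin 1 (Iio 1)) (nhds 0) := by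
  set μ : Measure ℝ := volume.restrict (Ioo s t) with hμdef
  haveI : IsFiniteMeasure μ := by
    constructor
    rw [hμdef, Measure.restrict_apply_univ]
    exact measure_Ioo_lt_top
  -- measurable representative of ρ
  have hρsm : AEStronglyMeasurable ρ μ := hρ_int.aestronglyMeasurable
  set ρ' : ℝ → ℝ := hρsm.mk ρ with hρ'def
  have hρ'meas : Measurable ρ' := hρsm.stronglyMeasurable_mk.measurable
  have hρρ' : ρ =ᵐ[μ] ρ' := hρsm.ae_eq_mk
  have hρ'int : Integrable ρ' μ := (integrable_congr hρρ').mp hρ_int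
  have hae' : ∀ᵐ τ ∂μ, Tendsto (fun m => ρm m τ) atTop (nhds (ρ' τ)) := by
    filter_upwards [hae, hρρ'] with τ h1 h2
    rwa [h2] at h1
  set T : ℝ → ℝ := fun α => Real.tan (α * π / 2) with hTdef
  set g : ℕ → ℝ → ℝ := fun m τ => (ρm m τ) ^ 2 / (1 + (ρm m τ) ^ 2) with hgdef
  set a : ℝ → ℕ → ℝ := fun α m => ∫ τ in J α m, g m τ with hadef
  set M : ℝ → ℝ := fun α => (μ {τ | T α - 1 ≤ ρ' τ}).toReal with hMdef
  -- basic facts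
  have hg0 : ∀ m τ, 0 ≤ g m τ := fun m τ => by positivity
  have hg1 : ∀ m τ, g m τ ≤ 1 := fun m τ => by
    rw [hgdef, div_le_one (by positivity)]; nlinarith [sq_nonneg (ρm m τ)]
  have hJeq : ∀ α m, J α m = Ioo s t ∩ {τ | T α < ρm m τ} := fun α m => by
    rw [hJ]; rfl
  have hJm : ∀ α m, MeasurableSet (J α m) := fun α m => by
    rw [hJeq]
    exact measurableSet_Ioo.inter (measurableSet_lt measurable_const (hmeas m))
  have hJsub : ∀ α m, J α m ⊆ Ioo s t := fun α m => by
    rw [hJeq]; exact inter_subset_left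
  have hvolJ : ∀ α m, volume (J α m) < ⊤ := fun α m =>
    lt_of_le_of_lt (measure_mono (hJsub α m)) measure_Ioo_lt_top
  have hgmeas : ∀ m, Measurable (g m) :=
    fun m => ((hmeas m).pow_const 2).div (measurable_const.add ((hmeas m).pow_const 2))
  have hgint : ∀ m (S : Set ℝ), volume S < ⊤ → IntegrableOn (g m) S := fun m S hS => by
    refine Integrable.mono' ((integrableOn_const hS.ne) :
        IntegrableOn (fun _ => (1:ℝ)) S volume)
      (hgmeas m).aestronglyMeasurable.restrict (ae_of_all _ fun τ => ?_)
    rw [Real.norm_eq_abs, abs_of_nonneg (hg0 m τ)]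
    exact hg1 m τ
  have haux : ∀ m (S : Set ℝ), MeasurableSet S → volume S < ⊤ →
      ∫ τ in S, g m τ ≤ (volume S).toReal := fun m S hSm hS => by
    calc ∫ τ in S, g m τ ≤ ∫ _ in S, (1:ℝ) :=
          setIntegral_mono_on (hgint m S hS) (integrableOn_const hS.ne) hSm
            (fun τ _ => hg1 m τ)
      _ = (volume S).toReal := by simp; rfl
  have ha_nonneg : ∀ α m, 0 ≤ a α m := fun α m =>
    setIntegral_nonneg (hJm α m) (fun τ _ => hg0 m τ)
  have ha_bdd : ∀ α, IsBoundedUnder (· ≤ ·) atTop (a α) := fun α => by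
    refine isBoundedUnder_of ⟨(t - s), fun m => ?_⟩
    calc a α m ≤ (volume (J α m)).toReal := haux m _ (hJm α m) (hvolJ α m)
      _ ≤ (volume (Ioo s t)).toReal :=
          ENNReal.toReal_mono measure_Ioo_lt_top.ne (measure_mono (hJsub α m))
      _ = t - s := by rw [Real.volume_Ioo, ENNReal.toReal_ofReal (by linarith)]
  -- key: limsup bound
  have key : ∀ α, 1 < T α → limsup (a α) atTop ≤ M α := by
    intro α hT1
    set A : Set ℝ := {τ | T α - 1 ≤ ρ' τ} with hAdef
    have hA : MeasurableSet A := measurableSet_le measurable_const hρ'meas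
    set ε : ℕ → ℝ := fun m => (volume (J α m \ A)).toReal with hεdef
    have step1 : ∀ m, a α m ≤ M α + ε m := by
      intro m
      have hsplit := integral_inter_add_diff (f := g m) (μ := volume) (s := J α m) hA
        (hgint m _ (hvolJ α m))
      have h1 : ∫ τ in J α m ∩ A, g m τ ≤ M α := by
        refine le_trans (haux m _ ((hJm α m).inter hA)
          (lt_of_le_of_lt (measure_mono inter_subset_left) (hvolJ α m))) ?_
        rw [hMdef]
        have hμA : μ A = volume (A ∩ Ioo s t) := Measure.restrict_apply hA
        refine ENNReal.toReal_mono ?_ ?_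
        · rw [hμA]; exact (lt_of_le_of_lt (measure_mono inter_subset_right)
            measure_Ioo_lt_top).ne
        · rw [hμA]
          exact measure_mono fun τ (hτ : τ ∈ J α m ∩ A) => ⟨hτ.2, hJsub α m hτ.1⟩
      have h2 : ∫ τ in J α m \ A, g m τ ≤ ε m :=
        haux m _ ((hJm α m).diff hA)
          (lt_of_le_of_lt (measure_mono diff_subset) (hvolJ α m))
      calc a α m = (∫ τ in J α m ∩ A, g m τ) + ∫ τ in J α m \ A, g m τ := hsplit.symm
        _ ≤ M α + ε m := add_le_add h1 h2
    have step2 : Tendsto ε atTop (nhds 0) := by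
      have hSm : ∀ m, MeasurableSet (J α m \ A) := fun m => (hJm α m).diff hA
      have hεeq : ∀ m, ε m = ∫ τ, Set.indicator (J α m \ A) (fun _ => (1:ℝ)) τ ∂μ := by
        intro m
        rw [integral_indicator_const (1:ℝ) (hSm m)]
        have : μ (J α m \ A) = volume ((J α m \ A) ∩ Ioo s t) :=
          Measure.restrict_apply (hSm m)
        rw [hεdef, smul_eq_mul, mul_one, measureReal_def, this,
          inter_eq_self_of_subset_left (fun τ (hτ : τ ∈ J α m \ A) => hJsub α m hτ.1)]
      have hdct : Tendsto (fun m => ∫ τ, Set.indicator (J α m \ A) (fun _ => (1:ℝ)) τ ∂μ)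
          atTop (nhds 0) := by
        have h0 : (0:ℝ) = ∫ τ, (0:ℝ) ∂μ := by simp
        rw [h0]
        apply tendsto_integral_filter_of_dominated_convergence (fun _ => (1:ℝ))
        · exact Eventually.of_forall fun m =>
            (measurable_const.indicator (hSm m)).aestronglyMeasurable
        · refine Eventually.of_forall fun m => ae_of_all _ fun τ => ?_
          simpa using norm_indicator_le_norm_self (s := J α m \ A)
            (f := fun _ => (1:ℝ)) (a := τ)
        · exact integrable_const 1
        · filter_upwards [hae'] with τ hτ
          rcases le_or_gt (T α - 1) (ρ' τ) with h | h
          · have : ∀ m, Set.indicator (J α m \ A) (fun _ => (1:ℝ)) τ = 0 := fun m =>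
              Set.indicator_of_notMem (fun hmem => hmem.2 h) _
            simpa [this] using tendsto_const_nhds (x := (0:ℝ)) (f := atTop (α := ℕ))
          · have hev : ∀ᶠ m in atTop, Set.indicator (J α m \ A) (fun _ => (1:ℝ)) τ = 0 := by
              filter_upwards [hτ.eventually_lt_const (by linarith : ρ' τ < T α)] with m hm
              refine Set.indicator_of_notMem (fun hmem => ?_) _
              rw [hJeq] at hmem
              exact absurd hmem.1.2 (not_lt.mpr hm.le)
            exact tendsto_const_nhds.congr' (hev.mono fun m h => h.symm)
      exact hdct.congr fun m => (hεeq m).symm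
    refine le_of_forall_pos_le_add fun δ hδ => ?_
    refine limsup_le_of_le (isCoboundedUnder_le_of_le atTop (ha_nonneg α)) ?_
    filter_upwards [step2.eventually_lt_const hδ] with m hm
    exact le_trans (step1 m) (by linarith)
  -- tendsto of the majorant
  have hBtend : Tendsto (fun α => (1 - α)⁻¹ * M α) (nhdsWithin 1 (Iio 1)) (nhds 0) := by
    have hsub : Tendsto (fun α : ℝ => 1 - α) (nhdsWithin 1 (Iio 1)) (nhds 0) := by
      have : Tendsto (fun α : ℝ => 1 - α) (nhds 1) (nhds (1 - 1)) :=
        tendsto_const_nhds.sub tendsto_id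
      simpa using this.mono_left nhdsWithin_le_nhds
    have h1 : Tendsto (fun α => (1 - α) * (T α - 1)) (nhdsWithin 1 (Iio 1)) (nhds (2 / π)) := by
      have := lemA.sub hsub
      rw [sub_zero] at this
      exact this.congr fun α => by ring
    have h2 : Tendsto (fun α => ((1 - α) * (T α - 1))⁻¹) (nhdsWithin 1 (Iio 1))
        (nhds ((2 / π)⁻¹)) :=
      h1.inv₀ (div_ne_zero two_ne_zero Real.pi_ne_zero)
    have h3 : Tendsto (fun α => T α - 1) (nhdsWithin 1 (Iio 1)) atTop :=
      tendsto_atTop_add_const_right _ (-1) lemB |>.congr fun α => by ring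
    have h4 : Tendsto (fun α => (T α - 1) * M α) (nhdsWithin 1 (Iio 1)) (nhds 0) :=
      (lemD μ ρ' hρ'meas hρ'int).comp h3
    have h5 := h2.mul h4
    rw [mul_zero] at h5
    refine h5.congr' ?_
    filter_upwards [self_mem_nhdsWithin, lemB.eventually_gt_atTop 1] with α (hα : α < 1) hT1
    have hne1 : (1:ℝ) - α ≠ 0 := by linarith
    have hne2 : T α - 1 ≠ 0 := by change (1:ℝ) < T α at hT1; linarith
    field_simp
  -- squeeze
  refine tendsto_of_tendsto_of_tendsto_of_le_of_le' tendsto_const_nhds hBtend ?_ ?_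
  · filter_upwards [self_mem_nhdsWithin] with α (hα : α < 1)
    refine mul_nonneg (inv_nonneg.mpr (by linarith)) ?_
    exact le_limsup_of_frequently_le (Frequently.of_forall (ha_nonneg α)) (ha_bdd α)
  · filter_upwards [self_mem_nhdsWithin, lemB.eventually_gt_atTop 1] with α (hα : α < 1) hT1
    exact mul_le_mul_of_nonneg_left (key α hT1) (inv_nonneg.mpr (by linarith))
end
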